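/- (Transitive state spaces with a classical degree of freedom have a classical subsystem.) Let S be a nonempty compact convex subset of a finite-dimensional real vector space V that spans V, equipped with a linear functional u : V → ℝ with u(s) = 1 for all s ∈ S. Suppose S is transitive (for any two extreme points x, y of S there is a linear automorphism T of V with T(S) = S and T(x) = y) and S is decomposable (there exist nonempty compact convex subsets S₁, S₂ ⊆ V whose linear spans intersect only in 0 with S = convexHull(S₁ ∪ S₂)). Then there exist an integer n ≥ 2, a finite-dimensional real vector space W, a nonempty compact convex subset C ⊆ W, and a linear equivalence φ : V ≃ ℝⁿ ⊗ W such that φ(S) = Δ_{n-1} ⊠ C, where Δ_{n-1} is the standard simplex in ℝⁿ (the convex hull of the standard basis vectors) and ⊠ is the minimal tensor product. -/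

import Mathlib

open Module Set Submodule

noncomputable section

open scoped TensorProduct

/-- The minimal tensor product of two state spaces: the convex hull of products of states. -/
def minTensor {V W : Type*} [AddCommGroup V] [Module ℝ V] [AddCommGroup W] [Module ℝ W]
    (A : Set V) (B : Set W) : Set (V ⊗[ℝ] W) :=
  convexHull ℝ {x : V ⊗[ℝ] W | ∃ a ∈ A, ∃ b ∈ B, x = a ⊗ₜ[ℝ] b}

/-- The standard simplex `Δ_{n-1}` in `ℝⁿ`: the convex hull of the standard basis vectors. -/
def simplexSet (n : ℕ) : Set (Fin n → ℝ) :=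
  convexHull ℝ {x : Fin n → ℝ | ∃ i : Fin n, x = Pi.single i 1}

/-- A state space is decomposable (has a classical degree of freedom) if it is the convex
hull of the union of two nonempty compact convex sets whose linear spans intersect only
in `0`. -/
def Decomposable {V : Type*} [NormedAddCommGroup V] [NormedSpace ℝ V] (S : Set V) : Prop :=
  ∃ S₁ S₂ : Set V, S₁.Nonempty ∧ IsCompact S₁ ∧ Convex ℝ S₁ ∧
    S₂.Nonempty ∧ IsCompact S₂ ∧ Convex ℝ S₂ ∧
    Submodule.span ℝ S₁ ⊓ Submodule.span ℝ S₂ = ⊥ ∧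
    S = convexHull ℝ (S₁ ∪ S₂)


set_option linter.unusedSectionVars false
namespace CSAux

variable {V : Type*} [NormedAddCommGroup V] [NormedSpace ℝ V] [FiniteDimensional ℝ V]

lemma finrank_biSup_le {ι : Type*} [DecidableEq ι] (s : Finset ι) (Q : ι → Submodule ℝ V) :
    finrank ℝ (⨆ i ∈ s, Q i : Submodule ℝ V) ≤ ∑ i ∈ s, finrank ℝ (Q i) := by
  induction s using Finset.induction with
  | empty => simp
  | insert a s ha ih =>
    rw [Finset.iSup_insert, Finset.sum_insert ha]
    exact le_trans (Submodule.finrank_add_le_finrank_add_finrank _ _) (by omega)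

lemma disjoint_of_finrank_biSup_eq {ι : Type*} [DecidableEq ι] (s : Finset ι)
    (Q : ι → Submodule ℝ V)
    (h : finrank ℝ (⨆ i ∈ s, Q i : Submodule ℝ V) = ∑ i ∈ s, finrank ℝ (Q i))
    {i : ι} (hi : i ∈ s) :
    Disjoint (Q i) (⨆ j ∈ s.erase i, Q j) := by
  have hsup : (⨆ j ∈ s, Q j : Submodule ℝ V) = Q i ⊔ ⨆ j ∈ s.erase i, Q j := by
    conv_lhs => rw [← Finset.insert_erase hi]
    rw [Finset.iSup_insert]
  have hsum : ∑ j ∈ s, finrank ℝ (Q j) = finrank ℝ (Q i) + ∑ j ∈ s.erase i, finrank ℝ (Q j) :=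
    (Finset.add_sum_erase s (fun j => finrank ℝ (Q j)) hi).symm
  have key := Submodule.finrank_sup_add_finrank_inf_eq (Q i) (⨆ j ∈ s.erase i, Q j)
  have hle := finrank_biSup_le (s.erase i) Q
  rw [hsup, hsum] at h
  have h0 : finrank ℝ (Q i ⊓ ⨆ j ∈ s.erase i, Q j : Submodule ℝ V) = 0 := by omega
  rw [disjoint_iff]
  exact Submodule.finrank_eq_zero.mp h0

lemma biSup_univ_eq {ι : Type*} [Fintype ι] (Q : ι → Submodule ℝ V) :
    (⨆ i ∈ Finset.univ, Q i : Submodule ℝ V) = ⨆ i, Q i :=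
  le_antisymm (iSup₂_le fun i _ => le_iSup Q i)
    (iSup_le fun i => le_iSup₂ (f := fun i (_ : i ∈ Finset.univ) => Q i) i (Finset.mem_univ i))

lemma iSupIndep_of_finrank_eq {ι : Type*} [Fintype ι] (Q : ι → Submodule ℝ V)
    (h : finrank ℝ (⨆ i, Q i : Submodule ℝ V) = ∑ i, finrank ℝ (Q i)) : iSupIndep Q := by
  classical
  intro i
  have := disjoint_of_finrank_biSup_eq Finset.univ Q (by rwa [biSup_univ_eq]) (Finset.mem_univ i)
  have heq : (⨆ j ∈ Finset.univ.erase i, Q j : Submodule ℝ V) = ⨆ (j) (_ : j ≠ i), Q j := by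
    simp [Finset.mem_erase]
  rwa [heq] at this

lemma finrank_biSup_eq_of_supIndep {ι : Type*} [DecidableEq ι] (s : Finset ι)
    (Q : ι → Submodule ℝ V) (h : s.SupIndep Q) :
    finrank ℝ (⨆ i ∈ s, Q i : Submodule ℝ V) = ∑ i ∈ s, finrank ℝ (Q i) := by
  induction s using Finset.induction with
  | empty => simp
  | insert a s ha ih =>
    have hdisj : Disjoint (Q a) (⨆ i ∈ s, Q i : Submodule ℝ V) := by
      rw [← Finset.sup_eq_iSup]
      exact h (Finset.subset_insert a s) (Finset.mem_insert_self a s) ha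
    rw [Finset.iSup_insert, Finset.sum_insert ha, ← ih (h.subset (Finset.subset_insert a s))]
    have key := Submodule.finrank_sup_add_finrank_inf_eq (Q a) (⨆ i ∈ s, Q i)
    rw [hdisj.eq_bot, finrank_bot] at key
    omega

lemma finrank_iSup_eq_of_iSupIndep {ι : Type*} [Fintype ι] (Q : ι → Submodule ℝ V)
    (h : iSupIndep Q) :
    finrank ℝ (⨆ i, Q i : Submodule ℝ V) = ∑ i, finrank ℝ (Q i) := by
  classical
  have := finrank_biSup_eq_of_supIndep Finset.univ Q (iSupIndep_iff_supIndep_univ.mp h)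
  rwa [biSup_univ_eq] at this

omit [FiniteDimensional ℝ V] in
lemma span_convexHull (X : Set V) : span ℝ (convexHull ℝ X) = span ℝ X :=
  le_antisymm (span_le.2 (convexHull_min subset_span (span ℝ X).convex))
    (span_mono (subset_convexHull ℝ X))


lemma htop_of {n : ℕ} {S : Set V} (U : Fin n → Submodule ℝ V)
    (hcov : S = convexHull ℝ (⋃ i, S ∩ (U i : Set V)))
    (hspan : Submodule.span ℝ S = ⊤) : ⨆ i, U i = ⊤ := by
  have h1 : span ℝ S = span ℝ (⋃ i, S ∩ (U i : Set V)) := by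
    conv_lhs => rw [hcov]
    rw [span_convexHull]
  have h2 : span ℝ (⋃ i, S ∩ (U i : Set V)) ≤ ⨆ i, U i := by
    rw [span_iUnion]
    exact iSup_le fun i => le_trans (span_mono inter_subset_right)
      (by rw [Submodule.span_eq]; exact le_iSup U i)
  exact top_unique (by rw [← hspan, h1]; exact h2)

lemma exists_proj {n : ℕ} (U : Fin n → Submodule ℝ V) (hind : iSupIndep U)
    (htop : ⨆ i, U i = ⊤) :
    ∃ π : Fin n → (V →ₗ[ℝ] V),
      (∀ i v, π i v ∈ U i) ∧
      (∀ i, ∀ v ∈ U i, π i v = v) ∧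
      (∀ i, ∀ v ∈ (⨆ (j) (_ : j ≠ i), U j), π i v = 0) ∧
      (∀ i j, j ≠ i → ∀ v ∈ U j, π i v = 0) ∧
      (∀ v, ∑ i, π i v = v) := by
  have hcompl : ∀ i, IsCompl (U i) (⨆ (j) (_ : j ≠ i), U j) := by
    intro i
    refine ⟨hind i, codisjoint_iff.mpr ?_⟩
    have hle : (⨆ j, U j) ≤ U i ⊔ ⨆ (j) (_ : j ≠ i), U j := by
      refine iSup_le fun j => ?_
      by_cases hj : j = i
      · subst hj; exact le_sup_left
      · exact le_trans (le_iSup_of_le j (le_iSup (fun _ : j ≠ i => U j) hj)) le_sup_right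
    exact top_unique (htop ▸ hle)
  have hstrong : ∀ i, ∀ v ∈ (⨆ (j) (_ : j ≠ i), U j),
      ((U i).subtype ∘ₗ Submodule.projectionOnto (U i) _ (hcompl i)) v = 0 := by
    intro i v hv
    have := Submodule.projectionOnto_apply_of_mem_right (hcompl i) hv
    simpa using congrArg (Subtype.val) this
  refine ⟨fun i => (U i).subtype ∘ₗ Submodule.projectionOnto (U i) _ (hcompl i),
    fun i v => (Submodule.projectionOnto (U i) _ (hcompl i) v).2, ?_, hstrong, ?_, ?_⟩
  · intro i v hv
    have := Submodule.projectionOnto_apply_left (hcompl i) ⟨v, hv⟩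
    simpa using congrArg (Subtype.val) this
  · intro i j hji v hv
    exact hstrong i v ((le_iSup_of_le j (le_iSup (fun _ : j ≠ i => U j) hji) : U j ≤ _) hv)
  · intro v
    have hv : v ∈ ⨆ i, U i := htop.symm ▸ Submodule.mem_top
    refine Submodule.iSup_induction (motive := fun x => ∑ i,
      ((U i).subtype ∘ₗ Submodule.projectionOnto (U i) _ (hcompl i)) x = x) U hv ?_ ?_ ?_
    · intro k x hx
      rw [Finset.sum_eq_single k]
      · have := Submodule.projectionOnto_apply_left (hcompl k) ⟨x, hx⟩
        simpa using congrArg (Subtype.val) this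
      · intro b _ hbk
        have hmem : x ∈ ⨆ (l) (_ : l ≠ b), U l :=
          (le_iSup_of_le k (le_iSup (fun _ : k ≠ b => U k) (Ne.symm hbk)) : U k ≤ _) hx
        have := Submodule.projectionOnto_apply_of_mem_right (hcompl b) hmem
        simpa using congrArg (Subtype.val) this
      · intro h; exact absurd (Finset.mem_univ k) h
    · simp
    · intro x y hx hy
      simp only [map_add, Finset.sum_add_distrib, hx, hy]

lemma isExtreme_part {n : ℕ} {S : Set V} (hSv : Convex ℝ S) (u : V →ₗ[ℝ] ℝ)
    (hu : ∀ s ∈ S, u s = 1) (U : Fin n → Submodule ℝ V) (hind : iSupIndep U)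
    (hne : ∀ i, (S ∩ (U i : Set V)).Nonempty)
    (hcov : S = convexHull ℝ (⋃ i, S ∩ (U i : Set V)))
    (hspan : Submodule.span ℝ S = ⊤) (i : Fin n) :
    IsExtreme ℝ S (S ∩ (U i : Set V)) := by
  have htop := htop_of U hcov hspan
  obtain ⟨π, hπmem, hπleft, hπstrong, hπright, hπsum⟩ := exists_proj U hind htop
  set K : Fin n → Set V := fun j => {v | ∃ t : ℝ, 0 ≤ t ∧ ∃ c ∈ S ∩ (U j : Set V), v = t • c}
    with hK
  have hKconv : ∀ j, Convex ℝ (K j) := by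
    intro j v₁ hv₁ v₂ hv₂ a b ha hb hab
    obtain ⟨t₁, ht₁, c₁, hc₁, rfl⟩ := hv₁
    obtain ⟨t₂, ht₂, c₂, hc₂, rfl⟩ := hv₂
    have ht : 0 ≤ a * t₁ + b * t₂ := by positivity
    rcases eq_or_lt_of_le ht with h0 | hpos
    · refine ⟨0, le_rfl, c₁, hc₁, ?_⟩
      have h1 : a * t₁ = 0 := by nlinarith
      have h2 : b * t₂ = 0 := by nlinarith
      simp [smul_smul, h1, h2]
    · refine ⟨a * t₁ + b * t₂, ht, (a * t₁ / (a * t₁ + b * t₂)) • c₁ +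
        (b * t₂ / (a * t₁ + b * t₂)) • c₂, ?_, ?_⟩
      · refine (hSv.inter (U j).convex) hc₁ hc₂ (by positivity) (by positivity) ?_
        field_simp
      · match_scalars <;> field_simp
  have hmain : ∀ x ∈ S, ∀ j, π j x ∈ K j := by
    intro x hx j
    have hsub : (⋃ k, S ∩ (U k : Set V)) ⊆ {y | ∀ j, π j y ∈ K j} := by
      rintro y hy j'
      obtain ⟨k, hyk⟩ := mem_iUnion.mp hy
      by_cases hkj : k = j'
      · subst hkj
        exact ⟨1, zero_le_one, y, hyk, by rw [one_smul, hπleft k y hyk.2]⟩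
      · obtain ⟨c, hc⟩ := hne j'
        exact ⟨0, le_rfl, c, hc, by rw [hπright j' k hkj y hyk.2, zero_smul]⟩
    have hconv : Convex ℝ {y | ∀ j, π j y ∈ K j} := by
      have heq : {y | ∀ j, π j y ∈ K j} = ⋂ j, (π j) ⁻¹' (K j) := by
        ext y; simp
      rw [heq]
      exact convex_iInter fun j => (hKconv j).linear_preimage (π j)
    exact convexHull_min hsub hconv (hcov ▸ hx) j
  refine ⟨inter_subset_left, ?_⟩
  intro x₁ hx₁ x₂ hx₂ x hx hseg
  obtain ⟨a, b, ha, hb, hab, hxeq⟩ := hseg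
  have hzero : ∀ y ∈ S, ∀ j, j ≠ i → ∀ (t : ℝ) (c : V), 0 ≤ t → c ∈ S → π j y = t • c →
      u (π j y) = t := by
    intro y _ j _ t c _ hcS heq
    rw [heq, map_smul, hu c hcS, smul_eq_mul, mul_one]
  have hproj0 : ∀ j, j ≠ i → π j x₁ = 0 ∧ π j x₂ = 0 := by
    intro j hji
    obtain ⟨t₁, ht₁, c₁, hc₁, he₁⟩ := hmain x₁ hx₁ j
    obtain ⟨t₂, ht₂, c₂, hc₂, he₂⟩ := hmain x₂ hx₂ j
    have hπx : π j x = 0 := hπright j i (Ne.symm hji) x hx.2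
    have hsum0 : a • π j x₁ + b • π j x₂ = 0 := by
      rw [← map_smul, ← map_smul, ← map_add, hxeq, hπx]
    have hu₁ : u (π j x₁) = t₁ := hzero x₁ hx₁ j hji t₁ c₁ ht₁ hc₁.1 he₁
    have hu₂ : u (π j x₂) = t₂ := hzero x₂ hx₂ j hji t₂ c₂ ht₂ hc₂.1 he₂
    have habt : a * t₁ + b * t₂ = 0 := by
      have := congrArg u hsum0
      simpa [map_add, map_smul, hu₁, hu₂, smul_eq_mul] using this
    have ht₁0 : t₁ = 0 := by nlinarith
    have ht₂0 : t₂ = 0 := by nlinarith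
    constructor
    · rw [he₁, ht₁0, zero_smul]
    · rw [he₂, ht₂0, zero_smul]
  have hUi : ∀ y ∈ S, (∀ j, j ≠ i → π j y = 0) → y ∈ U i := by
    intro y _ h0
    have hsum := hπsum y
    rw [Finset.sum_eq_single i (fun b _ hbi => h0 b hbi) 
      (fun h => absurd (Finset.mem_univ i) h)] at hsum
    exact hsum ▸ hπmem i y
  exact ⟨hx₁, hUi x₁ hx₁ fun j hj => (hproj0 j hj).1⟩



def PartProp (S : Set V) (n : ℕ) : Prop :=
  ∃ U : Fin n → Submodule ℝ V, iSupIndep U ∧ (∀ i, (S ∩ (U i : Set V)).Nonempty) ∧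
    S = convexHull ℝ (⋃ i, S ∩ (U i : Set V))

def SplitProp (S : Set V) (W₁ W₂ : Submodule ℝ V) : Prop :=
  W₁ ⊓ W₂ = ⊥ ∧ (S ∩ (W₁ : Set V)).Nonempty ∧ (S ∩ (W₂ : Set V)).Nonempty ∧
    S = convexHull ℝ ((S ∩ (W₁ : Set V)) ∪ (S ∩ (W₂ : Set V)))

lemma part_subset_join {n : ℕ} {S : Set V} (hSv : Convex ℝ S) (u : V →ₗ[ℝ] ℝ)
    (hu : ∀ s ∈ S, u s = 1) (U : Fin n → Submodule ℝ V) (hind : iSupIndep U)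
    (hne : ∀ i, (S ∩ (U i : Set V)).Nonempty)
    (hcov : S = convexHull ℝ (⋃ i, S ∩ (U i : Set V)))
    (hspan : Submodule.span ℝ S = ⊤)
    {W₁ W₂ : Submodule ℝ V} (hsp : SplitProp S W₁ W₂) (i : Fin n) :
    S ∩ (U i : Set V) ⊆
      convexHull ℝ ((S ∩ (U i : Set V) ∩ (W₁ : Set V)) ∪ (S ∩ (U i : Set V) ∩ (W₂ : Set V))) := by
  obtain ⟨hW, hA, hB, hSW⟩ := hsp
  have hface := isExtreme_part hSv u hu U hind hne hcov hspan i
  intro c hc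
  have hcS : c ∈ convexJoin ℝ (S ∩ (W₁ : Set V)) (S ∩ (W₂ : Set V)) := by
    rw [← Convex.convexHull_union (hSv.inter W₁.convex) (hSv.inter W₂.convex) hA hB, ← hSW]
    exact hc.1
  obtain ⟨p, hp, q, hq, hcseg⟩ := mem_convexJoin.mp hcS
  obtain ⟨a, b, ha, hb, hab, hpq⟩ := hcseg
  rcases eq_or_lt_of_le ha with h0 | hapos
  · have hb1 : b = 1 := by linarith
    have hcq : c = q := by rw [← hpq, ← h0, zero_smul, hb1, one_smul, zero_add]
    exact subset_convexHull ℝ _ (Or.inr ⟨hc, hcq ▸ hq.2⟩)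
  rcases eq_or_lt_of_le hb with h0' | hbpos
  · have ha1 : a = 1 := by linarith
    have hcp : c = p := by rw [← hpq, ← h0', zero_smul, ha1, one_smul, add_zero]
    exact subset_convexHull ℝ _ (Or.inl ⟨hc, hcp ▸ hp.2⟩)
  · have hco : c ∈ openSegment ℝ p q := ⟨a, b, hapos, hbpos, hab, hpq⟩
    obtain ⟨hpUi, hqUi⟩ := And.intro (hface.2 hp.1 hq.1 hc hco)
      (hface.right_mem_of_mem_openSegment hp.1 hq.1 hc hco)
    have hseg : segment ℝ p q ⊆ convexHull ℝ
        ((S ∩ (U i : Set V) ∩ (W₁ : Set V)) ∪ (S ∩ (U i : Set V) ∩ (W₂ : Set V))) :=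
      (convex_convexHull ℝ _).segment_subset
        (subset_convexHull ℝ _ (Or.inl ⟨hpUi, hp.2⟩))
        (subset_convexHull ℝ _ (Or.inr ⟨hqUi, hq.2⟩))
    exact hseg ⟨a, b, ha, hb, hab, hpq⟩

lemma refine_part {n : ℕ} {S : Set V} (hSv : Convex ℝ S) (u : V →ₗ[ℝ] ℝ)
    (hu : ∀ s ∈ S, u s = 1) (U : Fin n → Submodule ℝ V) (hind : iSupIndep U)
    (hne : ∀ i, (S ∩ (U i : Set V)).Nonempty)
    (hcov : S = convexHull ℝ (⋃ i, S ∩ (U i : Set V)))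
    (hspan : Submodule.span ℝ S = ⊤)
    {W₁ W₂ : Submodule ℝ V} (hsp : SplitProp S W₁ W₂)
    {i₀ : Fin n} (hi₁ : ¬ (S ∩ (U i₀ : Set V) ⊆ (W₁ : Set V)))
    (hi₂ : ¬ (S ∩ (U i₀ : Set V) ⊆ (W₂ : Set V))) :
    ∃ m, n < m ∧ PartProp S m := by
  classical
  set WB : Bool → Submodule ℝ V := fun b => bif b then W₁ else W₂ with hWB
  set X : Fin n × Bool → Set V := fun p => S ∩ (U p.1 : Set V) ∩ (WB p.2 : Set V) with hX
  set R : Fin n × Bool → Submodule ℝ V := fun p => Submodule.span ℝ (X p) with hR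
  have hXS : ∀ p, X p ⊆ S := fun p x hx => hx.1.1
  have hjoin : ∀ i, S ∩ (U i : Set V) ⊆ convexHull ℝ (X (i, true) ∪ X (i, false)) := fun i =>
    part_subset_join hSv u hu U hind hne hcov hspan hsp i
  have hullX : S = convexHull ℝ (⋃ p, X p) := by
    refine Set.Subset.antisymm ?_ (convexHull_min (Set.iUnion_subset hXS) hSv)
    · have hsub : (⋃ i, S ∩ (U i : Set V)) ⊆ convexHull ℝ (⋃ p, X p) := by
        rintro x hx
        obtain ⟨i, hxi⟩ := Set.mem_iUnion.mp hx
        refine convexHull_mono ?_ (hjoin i hxi)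
        rintro y (hy | hy)
        · exact Set.mem_iUnion.mpr ⟨(i, true), hy⟩
        · exact Set.mem_iUnion.mpr ⟨(i, false), hy⟩
      calc S = convexHull ℝ (⋃ i, S ∩ (U i : Set V)) := hcov
        _ ⊆ convexHull ℝ (⋃ p, X p) := convexHull_min hsub (convex_convexHull ℝ _)
  have hRle : ∀ p, R p ≤ U p.1 := fun p => Submodule.span_le.2 (fun x hx => hx.1.2)
  have hRW : ∀ (i : Fin n) (b : Bool), R (i, b) ≤ WB b :=
    fun i b => Submodule.span_le.2 (fun x hx => hx.2)
  have hUtop : ⨆ i, U i = ⊤ := htop_of U hcov hspan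
  have hRtop : ⨆ p, R p = ⊤ := by
    have h1 : Submodule.span ℝ S = Submodule.span ℝ (⋃ p, X p) := by
      conv_lhs => rw [hullX]
      rw [span_convexHull]
    rw [hR]
    rw [← Submodule.span_iUnion, ← h1, hspan]
  have hcount1 : finrank ℝ V ≤ ∑ p, finrank ℝ (R p) := by
    have := finrank_biSup_le (Finset.univ : Finset (Fin n × Bool)) R
    rw [biSup_univ_eq, hRtop, finrank_top] at this
    exact this
  have hcount2 : ∑ p, finrank ℝ (R p) ≤ finrank ℝ V := by
    have hib : ∀ i, finrank ℝ (R (i, true)) + finrank ℝ (R (i, false)) ≤ finrank ℝ (U i) := by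
      intro i
      have hdisj : R (i, true) ⊓ R (i, false) = ⊥ :=
        le_bot_iff.1 (le_trans (inf_le_inf (hRW i true) (hRW i false)) (le_of_eq hsp.1))
      have key := Submodule.finrank_sup_add_finrank_inf_eq (R (i, true)) (R (i, false))
      rw [hdisj, finrank_bot, add_zero] at key
      rw [← key]
      exact Submodule.finrank_mono (sup_le (hRle (i, true)) (hRle (i, false)))
    calc ∑ p, finrank ℝ (R p) = ∑ i, (finrank ℝ (R (i, true)) + finrank ℝ (R (i, false))) := by
          rw [Fintype.sum_prod_type]
          exact Finset.sum_congr rfl fun i _ => by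
            rw [Fintype.sum_bool]
      _ ≤ ∑ i, finrank ℝ (U i) := Finset.sum_le_sum fun i _ => hib i
      _ = finrank ℝ (⨆ i, U i : Submodule ℝ V) := (finrank_iSup_eq_of_iSupIndep U hind).symm
      _ ≤ finrank ℝ V := by rw [hUtop, finrank_top]
  have hRind : iSupIndep R := by
    refine iSupIndep_of_finrank_eq R ?_
    rw [hRtop, finrank_top]
    omega
  have hXne : ∀ i, (X (i, true)).Nonempty ∨ (X (i, false)).Nonempty := by
    intro i
    by_contra h
    push_neg at h
    obtain ⟨x, hx⟩ := hne i
    have := hjoin i hx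
    rw [h.1, h.2, Set.empty_union, convexHull_empty] at this
    exact this
  have hX₀t : (X (i₀, true)).Nonempty := by
    by_contra h
    rw [Set.not_nonempty_iff_eq_empty] at h
    refine hi₂ fun x hx => ?_
    have := hjoin i₀ hx
    rw [h, Set.empty_union] at this
    exact convexHull_min (fun y hy => hy.2) W₂.convex this
  have hX₀f : (X (i₀, false)).Nonempty := by
    by_contra h
    rw [Set.not_nonempty_iff_eq_empty] at h
    refine hi₁ fun x hx => ?_
    have := hjoin i₀ hx
    rw [h, Set.union_empty] at this
    exact convexHull_min (fun y hy => hy.2) W₁.convex this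
  set T := {p : Fin n × Bool // (X p).Nonempty} with hT
  have hm : n + 1 ≤ Fintype.card T := by
    let gb : Fin n → Bool := fun i => if (X (i, true)).Nonempty then true else false
    have hgb : ∀ i, (X (i, gb i)).Nonempty := by
      intro i
      by_cases h : (X (i, true)).Nonempty
      · simpa [gb, h] using h
      · have := (hXne i).resolve_left h
        simpa [gb, h] using this
    have hgb₀ : gb i₀ = true := if_pos hX₀t
    let F : Option (Fin n) → T := fun o =>
      o.elim ⟨(i₀, false), hX₀f⟩ (fun i => ⟨(i, gb i), hgb i⟩)
    have hFinj : Function.Injective F := by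
      intro o₁ o₂ h
      cases o₁ with
      | none => cases o₂ with
        | none => rfl
        | some i =>
          exfalso
          have h1 : (i₀, false) = (i, gb i) := congrArg Subtype.val h
          have h2 : i = i₀ := (congrArg Prod.fst h1).symm
          have h3 : gb i = false := (congrArg Prod.snd h1).symm
          rw [h2, hgb₀] at h3
          exact absurd h3 (by decide)
      | some i => cases o₂ with
        | none =>
          exfalso
          have h1 : (i, gb i) = (i₀, false) := congrArg Subtype.val h
          have h2 : i = i₀ := congrArg Prod.fst h1
          have h3 : gb i = false := congrArg Prod.snd h1
          rw [h2, hgb₀] at h3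
          exact absurd h3 (by decide)
        | some i' =>
          have h1 : (i, gb i) = (i', gb i') := congrArg Subtype.val h
          have h2 := congrArg Prod.fst h1
          simp only at h2
          rw [h2]
    calc n + 1 = Fintype.card (Option (Fin n)) := by simp
      _ ≤ Fintype.card T := Fintype.card_le_of_injective F hFinj
  set m := Fintype.card T with hmdef
  refine ⟨m, by omega, ?_⟩
  let e : Fin m ≃ T := (Fintype.equivFin T).symm
  refine ⟨fun k => R (e k).1, ?_, ?_, ?_⟩
  · exact hRind.comp (Subtype.val_injective.comp e.injective)
  · intro k
    obtain ⟨x, hx⟩ := (e k).2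
    exact ⟨x, hXS _ hx, Submodule.subset_span hx⟩
  · refine Set.Subset.antisymm ?_
      (convexHull_min (Set.iUnion_subset fun k => Set.inter_subset_left) hSv)
    have hsub : (⋃ p, X p) ⊆ ⋃ k, S ∩ ((R (e k).1 : Submodule ℝ V) : Set V) := by
      rintro x hx
      obtain ⟨p, hxp⟩ := Set.mem_iUnion.mp hx
      have hpne : (X p).Nonempty := ⟨x, hxp⟩
      refine Set.mem_iUnion.mpr ⟨e.symm ⟨p, hpne⟩, ?_⟩
      have hep : (e (e.symm ⟨p, hpne⟩)).1 = p := by rw [Equiv.apply_symm_apply]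
      rw [hep]
      exact ⟨hXS p hxp, Submodule.subset_span hxp⟩
    calc S = convexHull ℝ (⋃ p, X p) := hullX
      _ ⊆ _ := convexHull_mono hsub

lemma partProp_le_finrank {S : Set V} (u : V →ₗ[ℝ] ℝ) (hu : ∀ s ∈ S, u s = 1)
    {n : ℕ} (h : PartProp S n) : n ≤ finrank ℝ V := by
  obtain ⟨U, hind, hne, hcov⟩ := h
  have h1 : ∀ i, 1 ≤ finrank ℝ (U i) := by
    intro i
    rw [Submodule.one_le_finrank_iff]
    obtain ⟨x, hxS, hxU⟩ := hne i
    intro hbot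
    rw [hbot] at hxU
    have hx0 : x = 0 := by simpa using hxU
    have := hu x hxS
    rw [hx0, map_zero] at this
    exact zero_ne_one this
  calc n = ∑ _i : Fin n, 1 := by simp
    _ ≤ ∑ i, finrank ℝ (U i) := Finset.sum_le_sum fun i _ => h1 i
    _ = finrank ℝ (⨆ i, U i : Submodule ℝ V) := (finrank_iSup_eq_of_iSupIndep U hind).symm
    _ ≤ finrank ℝ V := Submodule.finrank_le _

lemma partProp_two {S : Set V} (hSv : Convex ℝ S)
    {S₁ S₂ : Set V} (h₁ : S₁.Nonempty) (h₂ : S₂.Nonempty)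
    (hW : Submodule.span ℝ S₁ ⊓ Submodule.span ℝ S₂ = ⊥)
    (hSU : S = convexHull ℝ (S₁ ∪ S₂)) : PartProp S 2 := by
  have hS₁S : S₁ ⊆ S := by
    rw [hSU]; exact Set.subset_union_left.trans (subset_convexHull ℝ _)
  have hS₂S : S₂ ⊆ S := by
    rw [hSU]; exact Set.subset_union_right.trans (subset_convexHull ℝ _)
  set U : Fin 2 → Submodule ℝ V := ![Submodule.span ℝ S₁, Submodule.span ℝ S₂] with hU
  have hU0 : U 0 = Submodule.span ℝ S₁ := rfl
  have hU1 : U 1 = Submodule.span ℝ S₂ := rfl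
  have hsup2 : (⨆ i : Fin 2, U i) = U 0 ⊔ U 1 := by
    refine le_antisymm (iSup_le fun i => ?_) (sup_le (le_iSup U 0) (le_iSup U 1))
    fin_cases i
    · exact le_sup_left
    · exact le_sup_right
  have hindep : iSupIndep U := by
    refine iSupIndep_of_finrank_eq U ?_
    rw [hsup2, Fin.sum_univ_two]
    have key := Submodule.finrank_sup_add_finrank_inf_eq (U 0) (U 1)
    have hbot : U 0 ⊓ U 1 = ⊥ := by rw [hU0, hU1]; exact hW
    rw [hbot, finrank_bot, add_zero] at key
    exact key
  refine ⟨U, hindep, ?_, ?_⟩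
  · intro i
    fin_cases i
    · obtain ⟨x, hx⟩ := h₁
      exact ⟨x, hS₁S hx, Submodule.subset_span hx⟩
    · obtain ⟨x, hx⟩ := h₂
      exact ⟨x, hS₂S hx, Submodule.subset_span hx⟩
  · refine Set.Subset.antisymm ?_
      (convexHull_min (Set.iUnion_subset fun i => Set.inter_subset_left) hSv)
    have hsub : S₁ ∪ S₂ ⊆ ⋃ i, S ∩ (U i : Set V) := by
      rintro x (hx | hx)
      · exact Set.mem_iUnion.mpr ⟨0, hS₁S hx, Submodule.subset_span hx⟩
      · exact Set.mem_iUnion.mpr ⟨1, hS₂S hx, Submodule.subset_span hx⟩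
    calc S = convexHull ℝ (S₁ ∪ S₂) := hSU
      _ ⊆ _ := convexHull_mono hsub

lemma maximal_key {n : ℕ} {S : Set V} (hSv : Convex ℝ S) (u : V →ₗ[ℝ] ℝ)
    (hu : ∀ s ∈ S, u s = 1) (U : Fin n → Submodule ℝ V) (hind : iSupIndep U)
    (hne : ∀ i, (S ∩ (U i : Set V)).Nonempty)
    (hcov : S = convexHull ℝ (⋃ i, S ∩ (U i : Set V)))
    (hspan : Submodule.span ℝ S = ⊤)
    (hmax : ∀ m, PartProp S m → m ≤ n)
    {W₁ W₂ : Submodule ℝ V} (hsp : SplitProp S W₁ W₂) (i : Fin n) :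
    S ∩ (U i : Set V) ⊆ (W₁ : Set V) ∨ S ∩ (U i : Set V) ⊆ (W₂ : Set V) := by
  by_contra h
  push_neg at h
  obtain ⟨m, hm, hP⟩ := refine_part hSv u hu U hind hne hcov hspan hsp h.1 h.2
  exact absurd (hmax m hP) (by omega)

lemma part_disj {n : ℕ} {S : Set V} (u : V →ₗ[ℝ] ℝ) (hu : ∀ s ∈ S, u s = 1)
    (U : Fin n → Submodule ℝ V) (hind : iSupIndep U)
    {i m : Fin n} (him : i ≠ m) {x : V} (hxi : x ∈ S ∩ (U i : Set V))
    (hxm : x ∈ S ∩ (U m : Set V)) : False := by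
  have hx0 : x = 0 := by
    refine (Submodule.mem_bot ℝ).mp ?_
    have hle : U m ≤ ⨆ (j) (_ : j ≠ i), U j :=
      le_iSup_of_le m (le_iSup (fun _ : m ≠ i => U m) (Ne.symm him))
    have := (hind i).eq_bot
    rw [← this]
    exact ⟨hxi.2, hle hxm.2⟩
  have := hu x hxi.1
  rw [hx0, map_zero] at this
  exact zero_ne_one this

lemma image_part_subset {n : ℕ} {S : Set V} (hSv : Convex ℝ S) (u : V →ₗ[ℝ] ℝ)
    (hu : ∀ s ∈ S, u s = 1) (U : Fin n → Submodule ℝ V) (hind : iSupIndep U)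
    (hne : ∀ i, (S ∩ (U i : Set V)).Nonempty)
    (hcov : S = convexHull ℝ (⋃ i, S ∩ (U i : Set V)))
    (hspan : Submodule.span ℝ S = ⊤) (h2 : 2 ≤ n)
    (hmax : ∀ m, PartProp S m → m ≤ n)
    (T : V ≃ₗ[ℝ] V) (hT : T '' S = S) (i : Fin n) :
    ∃ k, T '' (S ∩ (U i : Set V)) ⊆ S ∩ (U k : Set V) := by
  have hTsymm : T.symm '' S = S := by
    conv_lhs => rw [← hT]
    rw [Set.image_image]; simp
  have hTS : T '' (S ∩ (U i : Set V)) ⊆ S := by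
    rintro _ ⟨y, hy, rfl⟩
    have : T y ∈ T '' S := Set.mem_image_of_mem _ hy.1
    rwa [hT] at this
  -- base splittings
  have hnontriv : Nontrivial (Fin n) := Fin.nontrivial_iff_two_le.mpr h2
  have hbase : ∀ k : Fin n, SplitProp S (U k) (⨆ (j) (_ : j ≠ k), U j) := by
    intro k
    refine ⟨(hind k).eq_bot, hne k, ?_, ?_⟩
    · obtain ⟨j, hj⟩ := exists_ne k
      obtain ⟨x, hx⟩ := hne j
      exact ⟨x, hx.1, (le_iSup_of_le j (le_iSup (fun _ : j ≠ k => U j) hj) : U j ≤ _) hx.2⟩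
    · refine Set.Subset.antisymm ?_
        (convexHull_min (Set.union_subset Set.inter_subset_left Set.inter_subset_left) hSv)
      have hsub : (⋃ l, S ∩ (U l : Set V)) ⊆
          (S ∩ (U k : Set V)) ∪ (S ∩ ((⨆ (j) (_ : j ≠ k), U j : Submodule ℝ V) : Set V)) := by
        rintro x hx
        obtain ⟨l, hxl⟩ := Set.mem_iUnion.mp hx
        by_cases hlk : l = k
        · exact Or.inl (hlk ▸ hxl)
        · exact Or.inr ⟨hxl.1,
            (le_iSup_of_le l (le_iSup (fun _ : l ≠ k => U l) hlk) : U l ≤ _) hxl.2⟩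
      calc S = convexHull ℝ (⋃ l, S ∩ (U l : Set V)) := hcov
        _ ⊆ _ := convexHull_mono hsub
  -- transported splittings
  have himg : ∀ P : Submodule ℝ V,
      S ∩ (P.map (T.symm : V →ₗ[ℝ] V) : Set V) = T.symm '' (S ∩ (P : Set V)) := by
    intro P
    rw [Set.image_inter T.symm.injective, hTsymm, Submodule.map_coe]
    rfl
  have hsplit : ∀ k : Fin n, SplitProp S ((U k).map (T.symm : V →ₗ[ℝ] V))
      ((⨆ (j) (_ : j ≠ k), U j).map (T.symm : V →ₗ[ℝ] V)) := by
    intro k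
    obtain ⟨hb1, hb2, hb3, hb4⟩ := hbase k
    refine ⟨?_, ?_, ?_, ?_⟩
    · rw [eq_bot_iff]
      intro x hx
      obtain ⟨hx1, hx2⟩ := Submodule.mem_inf.mp hx
      obtain ⟨y, hy, hyx⟩ := Submodule.mem_map.mp hx1
      obtain ⟨z, hz, hzx⟩ := Submodule.mem_map.mp hx2
      simp only [LinearEquiv.coe_coe] at hyx hzx
      have hyz : y = z := T.symm.injective (by rw [hyx, hzx])
      have hybot : y ∈ U k ⊓ ⨆ (j) (_ : j ≠ k), U j := ⟨hy, hyz ▸ hz⟩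
      rw [hb1] at hybot
      have hy0 : y = 0 := (Submodule.mem_bot ℝ).mp hybot
      rw [Submodule.mem_bot, ← hyx, hy0, map_zero]
    · rw [himg]; exact hb2.image _
    · rw [himg]; exact hb3.image _
    · rw [himg, himg, ← Set.image_union, ← LinearEquiv.coe_coe, ← LinearMap.image_convexHull,
        ← hb4, LinearEquiv.coe_coe, hTsymm]
  have hiff : ∀ (P : Submodule ℝ V) (A : Set V),
      A ⊆ (P.map (T.symm : V →ₗ[ℝ] V) : Set V) ↔ T '' A ⊆ (P : Set V) := by
    intro P A
    constructor
    · rintro h _ ⟨y, hy, rfl⟩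
      obtain ⟨z, hz, hzy⟩ := Submodule.mem_map.mp (h hy)
      have : T y = z := by rw [← hzy]; simp
      exact this ▸ hz
    · intro h y hy
      exact Submodule.mem_map.mpr ⟨T y, h (Set.mem_image_of_mem _ hy), by simp⟩
  have halt : ∀ k : Fin n, T '' (S ∩ (U i : Set V)) ⊆ (U k : Set V) ∨
      T '' (S ∩ (U i : Set V)) ⊆ ((⨆ (j) (_ : j ≠ k), U j : Submodule ℝ V) : Set V) := by
    intro k
    exact (maximal_key hSv u hu U hind hne hcov hspan hmax (hsplit k) i).imp
      ((hiff _ _).mp) ((hiff _ _).mp)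
  by_cases hex : ∃ k, T '' (S ∩ (U i : Set V)) ⊆ (U k : Set V)
  · obtain ⟨k, hk⟩ := hex
    exact ⟨k, Set.subset_inter hTS hk⟩
  · exfalso
    push_neg at hex
    have hall : ∀ k : Fin n, T '' (S ∩ (U i : Set V)) ⊆
        ((⨆ (j) (_ : j ≠ k), U j : Submodule ℝ V) : Set V) :=
      fun k => (halt k).resolve_left (hex k)
    obtain ⟨x, hx⟩ := hne i
    have hTx : T x ∈ S := by
      have : T x ∈ T '' S := Set.mem_image_of_mem _ hx.1
      rwa [hT] at this
    have htop := htop_of U hcov hspan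
    obtain ⟨π, hπmem, hπleft, hπstrong, hπright, hπsum⟩ := exists_proj U hind htop
    have hz : ∀ k, π k (T x) = 0 := fun k =>
      hπstrong k (T x) (hall k (Set.mem_image_of_mem _ hx))
    have hTx0 : T x = 0 := by
      have := hπsum (T x)
      rw [Finset.sum_congr rfl fun k _ => hz k, Finset.sum_const, smul_zero] at this
      exact this.symm
    have := hu (T x) hTx
    rw [hTx0, map_zero] at this
    exact zero_ne_one this

lemma image_part_eq {n : ℕ} {S : Set V} (hSv : Convex ℝ S) (u : V →ₗ[ℝ] ℝ)
    (hu : ∀ s ∈ S, u s = 1) (U : Fin n → Submodule ℝ V) (hind : iSupIndep U)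
    (hne : ∀ i, (S ∩ (U i : Set V)).Nonempty)
    (hcov : S = convexHull ℝ (⋃ i, S ∩ (U i : Set V)))
    (hspan : Submodule.span ℝ S = ⊤) (h2 : 2 ≤ n)
    (hmax : ∀ m, PartProp S m → m ≤ n)
    (T : V ≃ₗ[ℝ] V) (hT : T '' S = S) (i : Fin n) :
    ∃ k, T '' (S ∩ (U i : Set V)) = S ∩ (U k : Set V) := by
  obtain ⟨k, hk⟩ := image_part_subset hSv u hu U hind hne hcov hspan h2 hmax T hT i
  have hTsymm : T.symm '' S = S := by
    conv_lhs => rw [← hT]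
    rw [Set.image_image]; simp
  have hT' : (T.symm : V ≃ₗ[ℝ] V) '' S = S := hTsymm
  obtain ⟨m, hm⟩ := image_part_subset hSv u hu U hind hne hcov hspan h2 hmax T.symm hT' k
  have hsub : S ∩ (U i : Set V) ⊆ T.symm '' (S ∩ (U k : Set V)) := by
    intro y hy
    exact ⟨T y, hk (Set.mem_image_of_mem _ hy), by simp⟩
  have hmi : m = i := by
    by_contra hmi
    obtain ⟨y, hy⟩ := hne i
    exact part_disj u hu U hind (Ne.symm hmi) hy (hm (hsub hy))
  refine ⟨k, Set.Subset.antisymm hk ?_⟩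
  intro y hy
  have : T.symm y ∈ S ∩ (U i : Set V) := hmi ▸ hm (Set.mem_image_of_mem _ hy)
  exact ⟨T.symm y, this, by simp⟩


lemma simplexSet_eq (n : ℕ) : simplexSet n = stdSimplex ℝ (Fin n) := by
  rw [simplexSet, ← convexHull_basis_eq_stdSimplex]
  congr 1
  ext x
  simp only [Set.mem_setOf_eq, Set.mem_range]
  constructor
  · rintro ⟨i, rfl⟩
    exact ⟨i, by funext j; simp [Pi.single_apply, eq_comm]⟩
  · rintro ⟨i, rfl⟩
    exact ⟨i, by funext j; simp [Pi.single_apply, eq_comm]⟩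


end CSAux

/-- Transitive state spaces with a classical degree of freedom have a classical subsystem:
`S ≅ Δ_{n-1} ⊠ C` for some `n ≥ 2` and some state space `C`. -/
theorem transitive_decomposable_has_classical_subsystem {V : Type*}
    [NormedAddCommGroup V] [NormedSpace ℝ V] [FiniteDimensional ℝ V]
    (S : Set V) (hS : S.Nonempty) (hSc : IsCompact S) (hSv : Convex ℝ S)
    (hspan : Submodule.span ℝ S = ⊤)
    (u : V →ₗ[ℝ] ℝ) (hu : ∀ s ∈ S, u s = 1)
    (htrans : ∀ x ∈ Set.extremePoints ℝ S, ∀ y ∈ Set.extremePoints ℝ S,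
      ∃ T : V ≃ₗ[ℝ] V, ⇑T '' S = S ∧ T x = y)
    (hdec : Decomposable S) :
    ∃ n : ℕ, 2 ≤ n ∧
      ∃ (W : Type) (_ : NormedAddCommGroup W) (_ : NormedSpace ℝ W),
        FiniteDimensional ℝ W ∧
        ∃ C : Set W, C.Nonempty ∧ IsCompact C ∧ Convex ℝ C ∧
          ∃ φ : V ≃ₗ[ℝ] ((Fin n → ℝ) ⊗[ℝ] W),
            ⇑φ '' S = minTensor (simplexSet n) C := by
  classical
  obtain ⟨S₁, S₂, h₁ne, h₁c, h₁v, h₂ne, h₂c, h₂v, hWbot, hSU⟩ := hdec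
  have hP2 : CSAux.PartProp S 2 := CSAux.partProp_two hSv h₁ne h₂ne hWbot hSU
  have hbound : ∀ m, CSAux.PartProp S m → m ≤ Module.finrank ℝ V :=
    fun m hm => CSAux.partProp_le_finrank u hu hm
  set n := Nat.findGreatest (fun m => CSAux.PartProp S m) (Module.finrank ℝ V) with hn
  have hPn : CSAux.PartProp S n := Nat.findGreatest_spec (hbound 2 hP2) hP2
  have h2n : 2 ≤ n := Nat.le_findGreatest (hbound 2 hP2) hP2
  have hmax : ∀ m, CSAux.PartProp S m → m ≤ n := by
    intro m hm
    by_contra h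
    push_neg at h
    exact absurd hm (Nat.findGreatest_is_greatest h (hbound m hm))
  clear_value n
  obtain ⟨U, hind, hne, hcov⟩ := hPn
  set i₀ : Fin n := ⟨0, by omega⟩ with hi₀
  -- extreme points of the parts
  have hpartc : ∀ i, IsCompact (S ∩ (U i : Set V)) :=
    fun i => hSc.inter_right (U i).closed_of_finiteDimensional
  have hface : ∀ i, IsExtreme ℝ S (S ∩ (U i : Set V)) :=
    fun i => CSAux.isExtreme_part hSv u hu U hind hne hcov hspan i
  have hex : ∀ i : Fin n, ∃ e, e ∈ Set.extremePoints ℝ (S ∩ (U i : Set V)) :=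
    fun i => (hpartc i).extremePoints_nonempty (hne i)
  choose e he using hex
  have heS : ∀ i, e i ∈ Set.extremePoints ℝ S :=
    fun i => (hface i).extremePoints_subset_extremePoints (he i)
  have hepart : ∀ i, e i ∈ S ∩ (U i : Set V) := fun i => extremePoints_subset (he i)
  -- transformations moving part i₀ to part i
  have hTex : ∀ i : Fin n, ∃ T : V ≃ₗ[ℝ] V, ⇑T '' S = S ∧ T (e i₀) = e i :=
    fun i => htrans (e i₀) (heS i₀) (e i) (heS i)
  choose T hTS hTe using hTex
  have hTpart : ∀ i, ⇑(T i) '' (S ∩ (U i₀ : Set V)) = S ∩ (U i : Set V) := by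
    intro i
    obtain ⟨k, hk⟩ :=
      CSAux.image_part_eq hSv u hu U hind hne hcov hspan h2n hmax (T i) (hTS i) i₀
    have heki : e i ∈ S ∩ (U k : Set V) := by
      rw [← hk]
      exact ⟨e i₀, hepart i₀, hTe i⟩
    have hki : k = i := by
      by_contra hki
      exact CSAux.part_disj u hu U hind hki heki (hepart i)
    rw [hki] at hk
    exact hk
  -- spans of parts
  set Q : Fin n → Submodule ℝ V := fun i => Submodule.span ℝ (S ∩ (U i : Set V)) with hQ
  have hQle : ∀ i, Q i ≤ U i := fun i => Submodule.span_le.2 (fun x hx => hx.2)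
  have hQind : iSupIndep Q := hind.mono hQle
  have hQtop : ⨆ i, Q i = ⊤ := by
    have h1 : Submodule.span ℝ S = Submodule.span ℝ (⋃ i, S ∩ (U i : Set V)) := by
      conv_lhs => rw [hcov]
      rw [CSAux.span_convexHull]
    rw [← hspan, h1, Submodule.span_iUnion]
  have hQmap : ∀ i, (Q i₀).map ((T i : V ≃ₗ[ℝ] V) : V →ₗ[ℝ] V) = Q i := by
    intro i
    rw [hQ]
    simp only [Submodule.map_span, LinearEquiv.coe_coe]
    rw [hTpart i]
  have hQrank : ∀ i, Module.finrank ℝ (Q i) = Module.finrank ℝ (Q i₀) := by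
    intro i
    rw [← hQmap i, LinearEquiv.finrank_map_eq]
  set d := Module.finrank ℝ (Q i₀) with hd
  set bas : Basis (Fin d) ℝ (Q i₀) := Module.finBasis ℝ (Q i₀) with hbas
  set jmap : (Fin d → ℝ) →ₗ[ℝ] V :=
    (Q i₀).subtype ∘ₗ (bas.equivFun.symm : (Fin d → ℝ) ≃ₗ[ℝ] (Q i₀)).toLinearMap with hjmap
  have hjrange : LinearMap.range jmap = Q i₀ := by
    rw [hjmap, LinearMap.range_comp, LinearEquiv.range, Submodule.map_top,
      Submodule.range_subtype]
  obtain ⟨Q', hQ'⟩ := Submodule.exists_isCompl (Q i₀)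
  set pr : V →ₗ[ℝ] (Q i₀) := Submodule.linearProjOfIsCompl _ _ hQ' with hpr
  set gmap : V →ₗ[ℝ] (Fin d → ℝ) :=
    (bas.equivFun : (Q i₀) ≃ₗ[ℝ] (Fin d → ℝ)).toLinearMap ∘ₗ pr with hgmap
  set C : Set (Fin d → ℝ) := ⇑gmap '' (S ∩ (U i₀ : Set V)) with hC
  have hjgx : ∀ x ∈ S ∩ (U i₀ : Set V), jmap (gmap x) = x := by
    intro x hx
    have hxQ : x ∈ Q i₀ := Submodule.subset_span hx
    have hprx : pr x = ⟨x, hxQ⟩ := Submodule.linearProjOfIsCompl_apply_left hQ' ⟨x, hxQ⟩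
    have hstep : jmap (gmap x) = (Q i₀).subtype (bas.equivFun.symm (bas.equivFun (pr x))) :=
      rfl
    rw [hstep, hprx, LinearEquiv.symm_apply_apply]
    rfl
  have hjC : ⇑jmap '' C = S ∩ (U i₀ : Set V) := by
    apply Set.Subset.antisymm
    · rintro _ ⟨b, hb, rfl⟩
      obtain ⟨y, hy, rfl⟩ := hb
      rw [hjgx y hy]
      exact hy
    · intro y hy
      exact ⟨gmap y, Set.mem_image_of_mem _ hy, hjgx y hy⟩
  have hjmem : ∀ b ∈ C, jmap b ∈ S ∩ (U i₀ : Set V) := fun b hb =>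
    hjC ▸ Set.mem_image_of_mem _ hb
  -- the bilinear map and the induced linear map on the tensor product
  set blin : (Fin n → ℝ) →ₗ[ℝ] (Fin d → ℝ) →ₗ[ℝ] V :=
    LinearMap.mk₂ ℝ (fun x w => ∑ i, x i • (T i) (jmap w))
      (fun x y w => by simp [add_smul, Finset.sum_add_distrib])
      (fun c x w => by simp [mul_smul, Finset.smul_sum])
      (fun x w₁ w₂ => by simp [map_add, smul_add, Finset.sum_add_distrib])
      (fun c x w => by
        simp only [map_smul, Finset.smul_sum]
        exact Finset.sum_congr rfl fun i _ => smul_comm _ _ _) with hblin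
  set L : ((Fin n → ℝ) ⊗[ℝ] (Fin d → ℝ)) →ₗ[ℝ] V := TensorProduct.lift blin with hL
  have hLt : ∀ (a : Fin n → ℝ) (b : Fin d → ℝ),
      L (a ⊗ₜ[ℝ] b) = ∑ i, a i • (T i) (jmap b) := by
    intro a b
    rw [hL, TensorProduct.lift.tmul, hblin, LinearMap.mk₂_apply]
  have hLe : ∀ (i : Fin n) (b : Fin d → ℝ),
      L ((Pi.single i 1 : Fin n → ℝ) ⊗ₜ[ℝ] b) = (T i) (jmap b) := by
    intro i b
    rw [hLt, Finset.sum_eq_single i]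
    · simp
    · intro k _ hki
      rw [Pi.single_eq_of_ne hki, zero_smul]
    · intro h
      exact absurd (Finset.mem_univ i) h
  have hrange : LinearMap.range L = ⊤ := by
    rw [eq_top_iff, ← hQtop]
    refine iSup_le fun i => ?_
    rw [← hQmap i]
    rintro x hx
    obtain ⟨y, hy, rfl⟩ := Submodule.mem_map.mp hx
    rw [← hjrange] at hy
    obtain ⟨w, rfl⟩ := hy
    exact ⟨(Pi.single i 1 : Fin n → ℝ) ⊗ₜ[ℝ] w, by rw [hLe i w]; rfl⟩
  have hfr : Module.finrank ℝ ((Fin n → ℝ) ⊗[ℝ] (Fin d → ℝ)) = Module.finrank ℝ V := by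
    rw [Module.finrank_tensorProduct, Module.finrank_fin_fun, Module.finrank_fin_fun]
    have hsum := CSAux.finrank_iSup_eq_of_iSupIndep Q hQind
    rw [hQtop, finrank_top] at hsum
    have hsum2 : ∑ i : Fin n, Module.finrank ℝ (Q i) = n * d := by
      rw [Finset.sum_congr rfl fun i _ => hQrank i]
      simp [mul_comm]
    rw [hsum, hsum2]
  have hsurj : Function.Surjective L := LinearMap.range_eq_top.mp hrange
  have hbij : Function.Bijective L :=
    ⟨(LinearMap.injective_iff_surjective_of_finrank_eq_finrank hfr).mpr hsurj, hsurj⟩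
  set eL : ((Fin n → ℝ) ⊗[ℝ] (Fin d → ℝ)) ≃ₗ[ℝ] V := LinearEquiv.ofBijective L hbij with heL
  have hCne : C.Nonempty := (hne i₀).image _
  have hCc : IsCompact C := (hpartc i₀).image gmap.continuous_of_finiteDimensional
  have hCv : Convex ℝ C := ((hSv.inter (U i₀).convex).linear_image gmap)
  have hM : ⇑L '' minTensor (simplexSet n) C = S := by
    rw [minTensor, LinearMap.image_convexHull]
    apply Set.Subset.antisymm
    · refine convexHull_min ?_ hSv
      rintro _ ⟨z, ⟨a, ha, b, hb, rfl⟩, rfl⟩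
      rw [hLt]
      have hstd : a ∈ stdSimplex ℝ (Fin n) := by
        rw [← CSAux.simplexSet_eq]
        exact ha
      obtain ⟨ha0, ha1⟩ := hstd
      refine hSv.sum_mem (fun i _ => ha0 i) ha1 (fun i _ => ?_)
      have hjb : jmap b ∈ S := (hjmem b hb).1
      have : (T i) (jmap b) ∈ ⇑(T i) '' S := Set.mem_image_of_mem _ hjb
      rwa [hTS i] at this
    · have hsub2 : (⋃ i, S ∩ (U i : Set V)) ⊆
          ⇑L '' {x : (Fin n → ℝ) ⊗[ℝ] (Fin d → ℝ) |
            ∃ a ∈ simplexSet n, ∃ b ∈ C, x = a ⊗ₜ[ℝ] b} := by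
        rintro x hx
        obtain ⟨i, hxi⟩ := Set.mem_iUnion.mp hx
        rw [← hTpart i] at hxi
        obtain ⟨y, hy, rfl⟩ := hxi
        rw [← hjC] at hy
        obtain ⟨b, hb, rfl⟩ := hy
        exact ⟨(Pi.single i 1 : Fin n → ℝ) ⊗ₜ[ℝ] b,
          ⟨Pi.single i 1, subset_convexHull ℝ _ ⟨i, rfl⟩, b, hb, rfl⟩, hLe i b⟩
      calc S = convexHull ℝ (⋃ i, S ∩ (U i : Set V)) := hcov
        _ ⊆ _ := convexHull_mono hsub2
  refine ⟨n, h2n, (Fin d → ℝ), inferInstance, inferInstance, inferInstance,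
    C, hCne, hCc, hCv, eL.symm, ?_⟩
  have hcomp : ∀ x, eL.symm (L x) = x := by
    intro x
    have hx : L x = eL x := rfl
    rw [hx, LinearEquiv.symm_apply_apply]
  rw [← hM, Set.image_image]
  rw [Set.image_congr (fun x _ => hcomp x)]
  exact Set.image_id _

end
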